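/- Shamir's polynomial-based (k, r, m)-ramp secret sharing over F_p (with p ≥ m + r and r ≤ k ≤ m): sharing a secret S ∈ F_p^r by choosing a uniformly random polynomial f of degree < k with f(i) = S_i for 0 ≤ i ≤ r−1 and shares X_j = f(r + j − 1) for 1 ≤ j ≤ m satisfies: (i) any k shares determine S, and (ii) for any set of at most k − r share positions, the joint distribution of those shares is independent of S. -/

import Mathlib

open scoped BigOperators Classical
noncomputable section

open Polynomial

/-- Evaluation of the polynomial with coefficient vector `cf` (degree `< k`) at `x`. -/
def polyEval {F : Type*} [Field F] {k : ℕ} (cf : Fin k → F) (x : F) : F :=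
  ∑ i : Fin k, cf i * x ^ (i : ℕ)

def toPoly {F : Type*} [Field F] {k : ℕ} (cf : Fin k → F) : F[X] :=
  ∑ i : Fin k, C (cf i) * X ^ (i : ℕ)

lemma toPoly_eval {F : Type*} [Field F] {k : ℕ} (cf : Fin k → F) (x : F) :
    (toPoly cf).eval x = polyEval cf x := by
  simp [toPoly, polyEval, eval_finset_sum]

lemma toPoly_degree {F : Type*} [Field F] {k : ℕ} (cf : Fin k → F) :
    (toPoly cf).degree < (k : ℕ) := by
  apply lt_of_le_of_lt (degree_sum_le _ _)
  apply Finset.sup_lt_iff (by exact_mod_cast WithBot.bot_lt_coe k) |>.mpr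
  intro i _
  calc (C (cf i) * X ^ (i:ℕ)).degree ≤ ((i:ℕ) : WithBot ℕ) :=
        degree_C_mul_X_pow_le (i:ℕ) (cf i)
    _ < ((k : ℕ) : WithBot ℕ) := by exact_mod_cast i.2

lemma polyEval_add {F : Type*} [Field F] {k : ℕ} (a b : Fin k → F) (x : F) :
    polyEval (a + b) x = polyEval a x + polyEval b x := by
  simp [polyEval, add_mul, Finset.sum_add_distrib]

lemma polyEval_sub {F : Type*} [Field F] {k : ℕ} (a b : Fin k → F) (x : F) :
    polyEval (a - b) x = polyEval a x - polyEval b x := by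
  simp [polyEval, sub_mul, Finset.sum_sub_distrib]

theorem shamir_ramp_sss
    {F : Type*} [Field F] [Fintype F] [DecidableEq F]
    (r k m : ℕ) (hrk : r ≤ k) (hkm : k ≤ m) (hcard : m + r ≤ Fintype.card F)
    (α : Fin (r + m) → F) (hα : Function.Injective α) :
    -- (i) reconstruction from any k shares
    (∀ A : Finset (Fin m), k ≤ A.card → ∀ c c' : Fin k → F,
      (∀ j ∈ A, polyEval c (α (Fin.natAdd r j)) = polyEval c' (α (Fin.natAdd r j))) →
      ∀ i : Fin r, polyEval c (α (Fin.castAdd m i)) = polyEval c' (α (Fin.castAdd m i))) ∧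
    -- (ii) any at most k − r shares are independent of the secret
    (∀ B : Finset (Fin m), B.card ≤ k - r → ∀ s s' : Fin r → F, ∀ v : Fin m → F,
      Fintype.card {c : Fin k → F //
          (∀ i : Fin r, polyEval c (α (Fin.castAdd m i)) = s i) ∧
          ∀ j ∈ B, polyEval c (α (Fin.natAdd r j)) = v j}
        = Fintype.card {c : Fin k → F //
            (∀ i : Fin r, polyEval c (α (Fin.castAdd m i)) = s' i) ∧
            ∀ j ∈ B, polyEval c (α (Fin.natAdd r j)) = v j}) := by
  have hnatAdd : Function.Injective (fun j : Fin m => α (Fin.natAdd r j)) := by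
    intro a b h
    have := hα h
    have : (Fin.natAdd r a : ℕ) = (Fin.natAdd r b : ℕ) := by rw [this]
    simp only [Fin.coe_natAdd] at this
    exact Fin.ext (by omega)
  constructor
  · -- (i)
    intro A hA c c' hcc i
    obtain ⟨A', hA'sub, hA'card⟩ := Finset.exists_subset_card_eq hA
    have heq : toPoly c = toPoly c' := by
      apply Polynomial.eq_of_degrees_lt_of_eval_index_eq A'
        (hnatAdd.injOn) (by rw [hA'card]; exact toPoly_degree c)
        (by rw [hA'card]; exact toPoly_degree c')
      intro j hj
      rw [toPoly_eval, toPoly_eval]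
      exact hcc j (hA'sub hj)
    rw [← toPoly_eval, ← toPoly_eval, heq]
  · -- (ii)
    intro B hB s s' v
    by_cases hk : k = 0
    · subst hk
      have hr : r = 0 := Nat.le_zero.mp hrk
      subst hr
      have hBe : B = ∅ := Finset.card_eq_zero.mp (Nat.le_zero.mp hB)
      subst hBe
      exact Fintype.card_congr (Equiv.subtypeEquivRight (by simp))
    · have hkpos : 0 < k := Nat.pos_of_ne_zero hk
      set T : Finset (Fin (r + m)) :=
        (Finset.univ.image (Fin.castAdd m)) ∪ (B.image (Fin.natAdd r)) with hT
      have hinj : Set.InjOn α T := hα.injOn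
      set w : Fin (r + m) → F :=
        fun t => if h : (t : ℕ) < r then s' ⟨t, h⟩ - s ⟨t, h⟩ else 0 with hw
      set g : F[X] := Lagrange.interpolate T α w with hg
      have hTcard : T.card ≤ k := by
        calc T.card ≤ (Finset.univ.image (Fin.castAdd m) : Finset (Fin (r+m))).card
              + (B.image (Fin.natAdd r)).card := Finset.card_union_le _ _
          _ ≤ r + B.card := by
              gcongr
              · calc _ ≤ (Finset.univ : Finset (Fin r)).card := Finset.card_image_le
                  _ = r := by simp
              · exact Finset.card_image_le
          _ ≤ k := by omega
      have hdeg : g.degree < (T.card : ℕ) := Lagrange.degree_interpolate_lt w hinj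
      have hnat : g.natDegree < k := by
        rcases eq_or_ne g 0 with h | h
        · simp [h, hkpos]
        · exact (Polynomial.natDegree_lt_iff_degree_lt h).mpr
            (lt_of_lt_of_le hdeg (by exact_mod_cast hTcard))
      set δ : Fin k → F := fun i => g.coeff i with hδ
      have hδeval : ∀ x, polyEval δ x = g.eval x := by
        intro x
        rw [eval_eq_sum_range' hnat, polyEval, Fin.sum_univ_eq_sum_range (fun i => g.coeff i * x ^ i)]
      have hδs : ∀ i : Fin r, polyEval δ (α (Fin.castAdd m i)) = s' i - s i := by
        intro i
        rw [hδeval, Lagrange.eval_interpolate_at_node w hinj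
          (by simp [hT])]
        simp [hw]
      have hδB : ∀ j ∈ B, polyEval δ (α (Fin.natAdd r j)) = 0 := by
        intro j hj
        rw [hδeval, Lagrange.eval_interpolate_at_node w hinj
          (by simp [hT]; exact Or.inr hj)]
        have hlt : ¬ ((Fin.natAdd r j : Fin (r+m)) : ℕ) < r := by simp
        rw [hw]; simp only [hlt, dif_neg, not_false_iff]
      apply Fintype.card_congr
      refine
        { toFun := fun c => ⟨c.1 + δ, ?_, ?_⟩
          invFun := fun c => ⟨c.1 - δ, ?_, ?_⟩
          left_inv := ?_
          right_inv := ?_ }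
      · intro i; rw [polyEval_add, c.2.1 i, hδs i]; ring
      · intro j hj; rw [polyEval_add, c.2.2 j hj, hδB j hj]; ring
      · intro i; rw [polyEval_sub, c.2.1 i, hδs i]; ring
      · intro j hj; rw [polyEval_sub, c.2.2 j hj, hδB j hj]; ring
      · intro c; ext x; simp
      · intro c; ext x; simp
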